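/- Let S > 0 and K = 1 - S, T = 1. Then for every b with 0 < b < S, the point (b, S - b, b/S, (S-b)/S) is an equilibrium of the system B₁' = B₁(1 - B₂ - T₁ - K·T₂), B₂' = B₂(1 - B₁ - T₂ - K·T₁), T₁' = B₁ - S·T₁, T₂' = T·B₂ - S·T₂; hence the system admits infinitely many coexistence equilibria. -/

import Mathlib

/-- The vector field of the nondimensional plant-soil feedback model. -/
def F (K S T : ℝ) (x : Fin 4 → ℝ) : Fin 4 → ℝ :=
  ![x 0 * (1 - x 1 - x 2 - K * x 3),
    x 1 * (1 - x 0 - x 3 - K * x 2),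
    x 0 - S * x 2,
    T * x 1 - S * x 3]

theorem infinitely_many_coexistence_equilibria (S : ℝ) (hS : 0 < S)
    (b : ℝ) (hb0 : 0 < b) (hbS : b < S) :
    F (1 - S) S 1 ![b, S - b, b / S, (S - b) / S] = 0 := by
  have hS' : S ≠ 0 := ne_of_gt hS
  have h1 : (1:ℝ) - (S - b) - b / S - (1 - S) * ((S - b) / S) = 0 := by
    field_simp; ring
  have h2 : (1:ℝ) - b - (S - b) / S - (1 - S) * (b / S) = 0 := by
    field_simp; ring
  have h3 : b - S * (b / S) = 0 := by field_simp; ring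
  have h4 : (1:ℝ) * (S - b) - S * ((S - b) / S) = 0 := by field_simp; ring
  funext i
  fin_cases i <;>
    simp only [F, Matrix.cons_val_zero, Matrix.cons_val_one, Matrix.head_cons,
      Matrix.cons_val_two, Matrix.tail_cons, Matrix.cons_val_three,
      Matrix.cons_val_fin_one, Pi.zero_apply]
  · rw [h1]; simp
  · rw [h2]; simp
  · rw [h3]; simp
  · rw [h4]; simp
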